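/- Let c be the two-phase speed function with c₁ ≥ c₂ > 0 and ρ* = 1/2 − (1/2)√(1 − c₂/c₁). Let the initial profile be constant, ρ₀ ≡ ρ with 0 < ρ < ρ*, and let v be given by the variational formula. Set r* = 1/2 − (1/2)√(1 − 4ρ(1−ρ)c₁/c₂). Then for every t > 0 and every x ∈ ℝ \ {0, c₂(1−2r*)t, c₂(1−2ρ)t}, the partial derivative ∂v/∂x(x,t) exists and equals: ρ if x < 0; r* if 0 < x < c₂(1−2r*)t; (1/2)(1 − x/(tc₂)) if c₂(1−2r*)t < x < c₂(1−2ρ)t; and ρ if x > c₂(1−2ρ)t. -/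

import Mathlib

open MeasureTheory ProbabilityTheory Real Set Filter Topology

noncomputable section


/-! ### The Hopf–Lax type variational formula for TASEP with discontinuous rates -/

/-- The wedge shape function `g`: `g(y) = -y` for `y ≤ -1`, `(1-y)²/4` for `-1 ≤ y ≤ 1`,
`0` for `y ≥ 1`. -/
def gfun (y : ℝ) : ℝ := if y ≤ -1 then -y else if y ≤ 1 then (1 - y) ^ 2 / 4 else 0

/-- A continuous, piecewise `C¹` path `w : [0,t] → ℝ` with `w(t) = x`. -/
def IsVPath (t x : ℝ) (w : ℝ → ℝ) : Prop :=
  ContinuousOn w (Icc 0 t) ∧ w t = x ∧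
    ∃ (k : ℕ) (s : Fin (k + 1) → ℝ), StrictMono s ∧ s 0 = 0 ∧ s (Fin.last k) = t ∧
      ∀ i : Fin k, ContDiffOn ℝ 1 w (Icc (s i.castSucc) (s i.succ))

/-- `w` is affine on `[a,b]`. -/
def AffineOnR (w : ℝ → ℝ) (a b : ℝ) : Prop :=
  ∀ u ∈ Icc a b, w u = w a + ((u - a) / (b - a)) * (w b - w a)

/-- A continuous, piecewise linear path `w : [0,t] → ℝ` with `w(t) = x`. -/
def IsPLPath (t x : ℝ) (w : ℝ → ℝ) : Prop :=
  ContinuousOn w (Icc 0 t) ∧ w t = x ∧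
    ∃ (k : ℕ) (s : Fin (k + 1) → ℝ), StrictMono s ∧ s 0 = 0 ∧ s (Fin.last k) = t ∧
      ∀ i : Fin k, AffineOnR w (s i.castSucc) (s i.succ)

/-- `v₀` is an antiderivative of the initial profile `ρ₀`, normalized by `v₀(0) = 0`. -/
def IsV0For (ρ₀ v₀ : ℝ → ℝ) : Prop :=
  v₀ 0 = 0 ∧ ∀ a b : ℝ, v₀ b - v₀ a = ∫ x in a..b, ρ₀ x

/-- The variational formula:
`v(x,t) = sup over paths w with w(t) = x of { v₀(w(0)) - ∫₀ᵗ c(w(s)) g(w'(s)/c(w(s))) ds }`,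
with `v(x,0) = v₀(x)`. -/
def vFun (c v₀ : ℝ → ℝ) (x t : ℝ) : ℝ :=
  if t ≤ 0 then v₀ x
  else sSup { A | ∃ w : ℝ → ℝ, IsVPath t x w ∧
    A = v₀ (w 0) - ∫ s in (0:ℝ)..t, c (w s) * gfun (deriv w s / c (w s)) }

/-- The two-phase speed function: `c₁` to the left of the origin, `c₂` to its right. -/
def twoPhase (c₁ c₂ : ℝ) : ℝ → ℝ := fun u => if u < 0 then c₁ else c₂

/-- The conjugate `(a·h)*(y) = inf_{ρ ∈ ℝ} ( yρ - a ρ(1-ρ) )` of the unrestricted flux. -/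
def hstar (a y : ℝ) : ℝ := sInf { v | ∃ ρ : ℝ, v = y * ρ - a * (ρ * (1 - ρ)) }

/-- The Hopf–Lax formula over piecewise linear paths with the conjugate `(c·h)*`. -/
def VFunPL (c v₀ : ℝ → ℝ) (x t : ℝ) : ℝ :=
  sSup { A | ∃ w : ℝ → ℝ, IsPLPath t x w ∧
    A = v₀ (w 0) + ∫ s in (0:ℝ)..t, hstar (c (w s)) (deriv w s) }



/-! ### Auxiliary lemmas -/

lemma gfun_nonneg (y : ℝ) : 0 ≤ gfun y := by
  unfold gfun; split_ifs with h1 h2 <;> nlinarith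

lemma gfun_le (y : ℝ) : gfun y ≤ |y| + 1 := by
  unfold gfun; split_ifs with h1 h2
  · nlinarith [abs_nonneg y, neg_abs_le y]
  · push_neg at h1; nlinarith [abs_nonneg y]
  · positivity

lemma gfun_dual {m : ℝ} (hm0 : 0 ≤ m) (hm1 : m ≤ 1) (y : ℝ) :
    m * (1 - m) - m * y ≤ gfun y := by
  unfold gfun; split_ifs with h1 h2
  · nlinarith [mul_nonneg (sub_nonneg.mpr hm1) (by linarith : (0:ℝ) ≤ -m - y)]
  · nlinarith [sq_nonneg (1 - y - 2*m)]
  · nlinarith [mul_nonneg hm0 (by linarith : (0:ℝ) ≤ m + y - 1)]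

lemma gfun_eval {y : ℝ} (h1 : -1 ≤ y) (h2 : y ≤ 1) : gfun y = (1 - y)^2/4 := by
  unfold gfun
  rcases eq_or_lt_of_le h1 with h | h
  · simp [← h]; norm_num
  · rw [if_neg (by linarith), if_pos h2]


lemma gfun_measurable : Measurable gfun := by
  unfold gfun
  exact Measurable.ite (measurableSet_le measurable_id measurable_const) measurable_neg
    (Measurable.ite (measurableSet_le measurable_id measurable_const) (by fun_prop)
      measurable_const)

lemma twoPhase_measurable (c₁ c₂ : ℝ) : Measurable (twoPhase c₁ c₂) := by
  unfold twoPhase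
  exact Measurable.ite (measurableSet_lt measurable_id measurable_const) measurable_const
    measurable_const

def Lam (ρ r : ℝ) (u : ℝ) : ℝ := if u < 0 then ρ * u else r * u

lemma Lam_continuous (ρ r : ℝ) : Continuous (Lam ρ r) := by
  unfold Lam
  apply Continuous.if ?_ (by fun_prop) (by fun_prop)
  intro a ha
  have : a = 0 := by
    have h1 : {x : ℝ | x < 0} = Iio 0 := rfl
    rw [h1, frontier_Iio] at ha
    simpa using ha
  simp [this]

lemma Lam_abs_le {ρ r : ℝ} (hρ0 : 0 ≤ ρ) (hρr : ρ ≤ r) (hr1 : r ≤ 1) (u : ℝ) :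
    |Lam ρ r u| ≤ |u| := by
  unfold Lam; split_ifs with h
  · rw [abs_mul]
    exact mul_le_of_le_one_left (abs_nonneg u) (abs_le.mpr ⟨by linarith, by linarith⟩)
  · rw [abs_mul]
    exact mul_le_of_le_one_left (abs_nonneg u) (abs_le.mpr ⟨by linarith, by linarith⟩)

lemma rho_le_Lam {ρ r : ℝ} (hρr : ρ ≤ r) (u : ℝ) : ρ * u ≤ Lam ρ r u := by
  unfold Lam; split_ifs with h
  · exact le_refl _
  · push_neg at h; nlinarith [mul_nonneg (sub_nonneg.mpr hρr) h]

section Piece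
variable {c₁ c₂ ρ r : ℝ}

lemma piece_bound (h₂ : 0 < c₂) (h₁₂ : c₂ ≤ c₁) (hρ0 : 0 ≤ ρ) (hρr : ρ ≤ r) (hr1 : r ≤ 1)
    (hK : c₂ * (r * (1 - r)) ≤ c₁ * (ρ * (1 - ρ)))
    {a b : ℝ} (hab : a < b) {w : ℝ → ℝ} (hw : ContDiffOn ℝ 1 w (Icc a b)) :
    IntervalIntegrable
      (fun s => twoPhase c₁ c₂ (w s) * gfun (deriv w s / twoPhase c₁ c₂ (w s))) volume a b ∧
    c₂ * (r * (1 - r)) * (b - a) - (Lam ρ r (w b) - Lam ρ r (w a))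
      ≤ ∫ s in a..b, twoPhase c₁ c₂ (w s) * gfun (deriv w s / twoPhase c₁ c₂ (w s)) := by
  have hc₁ : 0 < c₁ := lt_of_lt_of_le h₂ h₁₂
  have hr0 : 0 ≤ r := le_trans hρ0 hρr
  set f : ℝ → ℝ := fun s => twoPhase c₁ c₂ (w s) * gfun (deriv w s / twoPhase c₁ c₂ (w s))
    with hf_def
  set φ : ℝ → ℝ :=
    fun s => (if w s < 0 ∨ (w s ≤ 0 ∧ deriv w s < 0) then ρ else r) * deriv w s with hφ_def
  have htp_lb : ∀ u : ℝ, c₂ ≤ twoPhase c₁ c₂ u := by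
    intro u; unfold twoPhase; split_ifs; exacts [h₁₂, le_refl _]
  have htp_ub : ∀ u : ℝ, twoPhase c₁ c₂ u ≤ c₁ := by
    intro u; unfold twoPhase; split_ifs; exacts [le_refl _, h₁₂]
  have htp_pos : ∀ u : ℝ, 0 < twoPhase c₁ c₂ u := fun u => lt_of_lt_of_le h₂ (htp_lb u)
  -- derivative identification on the interior
  have hwd : ∀ s ∈ Ioo a b, HasDerivAt w (derivWithin w (Icc a b) s) s := by
    intro s hs
    exact ((hw.differentiableOn one_ne_zero s (Ioo_subset_Icc_self hs)).hasDerivWithinAt).hasDerivAt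
      (Icc_mem_nhds hs.1 hs.2)
  have hwd' : ∀ s ∈ Ioo a b, HasDerivAt w (deriv w s) s := by
    intro s hs; have h := hwd s hs; rw [h.deriv]; exact h
  -- bound on the derivative
  have hdc : ContinuousOn (derivWithin w (Icc a b)) (Icc a b) :=
    hw.continuousOn_derivWithin (uniqueDiffOn_Icc hab) le_rfl
  obtain ⟨M, hM⟩ := (isCompact_Icc (a := a) (b := b)).exists_bound_of_continuousOn hdc
  have hM0 : 0 ≤ M := le_trans (norm_nonneg _) (hM a (left_mem_Icc.mpr hab.le))
  have hMd : ∀ s ∈ Ioo a b, |deriv w s| ≤ M := by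
    intro s hs
    rw [(hwd s hs).deriv]
    simpa [Real.norm_eq_abs] using hM s (Ioo_subset_Icc_self hs)
  -- measurability
  have hw_meas : AEMeasurable w (volume.restrict (Ioc a b)) :=
    (hw.continuousOn.aemeasurable measurableSet_Icc).mono_measure
      (Measure.restrict_mono Ioc_subset_Icc_self le_rfl)
  have hd_meas : AEMeasurable (deriv w) (volume.restrict (Ioc a b)) :=
    (measurable_deriv w).aemeasurable
  have hφ_meas : AEMeasurable φ (volume.restrict (Ioc a b)) := by
    have hF : Measurable fun p : ℝ × ℝ =>
        (if p.1 < 0 ∨ (p.1 ≤ 0 ∧ p.2 < 0) then ρ else r) * p.2 := by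
      refine Measurable.mul ?_ measurable_snd
      refine Measurable.ite ?_ measurable_const measurable_const
      exact (measurableSet_lt measurable_fst measurable_const).union
        ((measurableSet_le measurable_fst measurable_const).inter
          (measurableSet_lt measurable_snd measurable_const))
    exact hF.comp_aemeasurable (hw_meas.prodMk hd_meas)
  have hf_meas : AEMeasurable f (volume.restrict (Ioc a b)) := by
    have hG : Measurable fun p : ℝ × ℝ =>
        twoPhase c₁ c₂ p.1 * gfun (p.2 / twoPhase c₁ c₂ p.1) := by
      exact ((twoPhase_measurable c₁ c₂).comp measurable_fst).mul
        (gfun_measurable.comp (measurable_snd.div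
          ((twoPhase_measurable c₁ c₂).comp measurable_fst)))
    exact hG.comp_aemeasurable (hw_meas.prodMk hd_meas)
  -- a.e. membership in Ioo
  have hae_Ioo : ∀ᵐ s ∂(volume.restrict (Ioc a b)), s ∈ Ioo a b := by
    have hb : ∀ᵐ s : ℝ, s ≠ b := by
      simp [ae_iff, Set.setOf_eq_eq_singleton]
    filter_upwards [ae_restrict_mem measurableSet_Ioc, ae_restrict_of_ae hb] with s hs hsb
    exact ⟨hs.1, lt_of_le_of_ne hs.2 hsb⟩
  -- integrability of φ
  have hφ_int : IntervalIntegrable φ volume a b := by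
    rw [intervalIntegrable_iff_integrableOn_Ioc_of_le hab.le]
    refine Integrable.mono' (integrable_const M) hφ_meas.aestronglyMeasurable ?_
    filter_upwards [hae_Ioo] with s hs
    have h1 : |deriv w s| ≤ M := hMd s hs
    rw [hφ_def, Real.norm_eq_abs, abs_mul]
    have h2 : |if w s < 0 ∨ (w s ≤ 0 ∧ deriv w s < 0) then ρ else r| ≤ 1 := by
      split_ifs <;> rw [abs_le] <;> constructor <;> linarith
    nlinarith [abs_nonneg (deriv w s)]
  -- integrability of f
  have hf_int : IntervalIntegrable f volume a b := by
    rw [intervalIntegrable_iff_integrableOn_Ioc_of_le hab.le]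
    refine Integrable.mono' (integrable_const (c₁ * (M / c₂ + 1)))
      hf_meas.aestronglyMeasurable ?_
    filter_upwards [hae_Ioo] with s hs
    have h1 : |deriv w s| ≤ M := hMd s hs
    have h2 : 0 < twoPhase c₁ c₂ (w s) := htp_pos (w s)
    have h3 : |deriv w s / twoPhase c₁ c₂ (w s)| ≤ M / c₂ := by
      rw [abs_div, abs_of_pos h2]
      exact div_le_div₀ hM0 h1 h₂ (htp_lb (w s))
    have h4 : gfun (deriv w s / twoPhase c₁ c₂ (w s)) ≤ M / c₂ + 1 :=
      le_trans (gfun_le _) (by linarith)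
    have h5 : 0 ≤ gfun (deriv w s / twoPhase c₁ c₂ (w s)) := gfun_nonneg _
    have h6 := htp_ub (w s)
    rw [hf_def, Real.norm_eq_abs, abs_of_nonneg (mul_nonneg h2.le h5)]
    nlinarith
  -- continuity of Λ ∘ w
  have hF_cont : ContinuousOn (fun s => Lam ρ r (w s)) (Icc a b) :=
    (Lam_continuous ρ r).comp_continuousOn hw.continuousOn
  -- right derivative of Λ ∘ w
  have hFd : ∀ s ∈ Ioo a b, HasDerivWithinAt (fun u => Lam ρ r (w u)) (φ s) (Ioi s) s := by
    intro s hs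
    have hds : HasDerivAt w (deriv w s) s := hwd' s hs
    have hcs : ContinuousAt w s := hds.continuousAt
    rcases lt_trichotomy (w s) 0 with hws | hws | hws
    · have hEq : (fun u => Lam ρ r (w u)) =ᶠ[𝓝 s] fun u => ρ * w u := by
        filter_upwards [hcs (Iio_mem_nhds hws)] with u hu
        simp only [Set.mem_preimage, Set.mem_Iio] at hu
        simp [Lam, hu]
      have h1 : HasDerivAt (fun u => ρ * w u) (ρ * deriv w s) s := hds.const_mul ρ
      have h2 : φ s = ρ * deriv w s := by rw [hφ_def]; simp [hws]
      rw [h2]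
      exact (h1.congr_of_eventuallyEq hEq).hasDerivWithinAt
    · -- w s = 0
      have hslope : Tendsto (slope w s) (𝓝[≠] s) (𝓝 (deriv w s)) :=
        hasDerivAt_iff_tendsto_slope.mp hds
      rcases lt_trichotomy (deriv w s) 0 with hd | hd | hd
      · -- negative derivative: w < 0 just to the right
        have hev : ∀ᶠ u in 𝓝[>] s, w u < 0 := by
          have h1 : ∀ᶠ u in 𝓝[≠] s, slope w s u < 0 := hslope.eventually_lt_const hd
          have h2 : ∀ᶠ u in 𝓝[>] s, slope w s u < 0 :=
            h1.filter_mono (nhdsWithin_mono s fun u hu => ne_of_gt hu)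
          filter_upwards [h2, self_mem_nhdsWithin] with u hu hu'
          have hne : u - s ≠ 0 := sub_ne_zero.mpr (ne_of_gt (mem_Ioi.mp hu'))
          have : w u - w s = slope w s u * (u - s) := by
            rw [slope_def_field, div_mul_cancel₀ _ hne]
          nlinarith [mem_Ioi.mp hu', hu]
        have hEq : (fun u => Lam ρ r (w u)) =ᶠ[𝓝[>] s] fun u => ρ * w u := by
          filter_upwards [hev] with u hu; simp [Lam, hu]
        have h1 : HasDerivWithinAt (fun u => ρ * w u) (ρ * deriv w s) (Ioi s) s :=
          (hds.const_mul ρ).hasDerivWithinAt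
        have h2 : φ s = ρ * deriv w s := by
          have hcond : w s < 0 ∨ (w s ≤ 0 ∧ deriv w s < 0) := Or.inr ⟨hws.le, hd⟩
          simp only [hφ_def]; simp only [if_pos hcond]
        rw [h2]
        exact h1.congr_of_eventuallyEq hEq (by simp [Lam, hws])
      · -- zero derivative
        have h2 : φ s = 0 := by simp only [hφ_def, hd, mul_zero]
        rw [h2]
        have h1 : (fun u => w u - w s) =o[𝓝 s] fun u => u - s := by
          simpa [hd] using hasDerivAt_iff_isLittleO.mp hds
        have h3 : HasDerivAt (fun u => Lam ρ r (w u)) 0 s := by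
          rw [hasDerivAt_iff_isLittleO]
          simp only [smul_zero, sub_zero, zero_smul]
          have h4 : (fun u => Lam ρ r (w u) - Lam ρ r (w s)) =O[𝓝 s]
              fun u => w u - w s := by
            apply Asymptotics.isBigO_of_le
            intro u
            have hLs : Lam ρ r (w s) = 0 := by simp [Lam, hws]
            rw [Real.norm_eq_abs, Real.norm_eq_abs, hLs, sub_zero, hws, sub_zero]
            exact Lam_abs_le hρ0 hρr hr1 (w u)
          exact h4.trans_isLittleO h1
        exact h3.hasDerivWithinAt
      · -- positive derivative: w > 0 just to the right
        have hev : ∀ᶠ u in 𝓝[>] s, 0 < w u := by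
          have h1 : ∀ᶠ u in 𝓝[≠] s, 0 < slope w s u := hslope.eventually_const_lt hd
          have h2 : ∀ᶠ u in 𝓝[>] s, 0 < slope w s u :=
            h1.filter_mono (nhdsWithin_mono s fun u hu => ne_of_gt hu)
          filter_upwards [h2, self_mem_nhdsWithin] with u hu hu'
          have hne : u - s ≠ 0 := sub_ne_zero.mpr (ne_of_gt (mem_Ioi.mp hu'))
          have : w u - w s = slope w s u * (u - s) := by
            rw [slope_def_field, div_mul_cancel₀ _ hne]
          nlinarith [mem_Ioi.mp hu', hu]
        have hEq : (fun u => Lam ρ r (w u)) =ᶠ[𝓝[>] s] fun u => r * w u := by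
          filter_upwards [hev] with u hu; simp [Lam, not_lt.mpr hu.le, asymm hu]
        have h1 : HasDerivWithinAt (fun u => r * w u) (r * deriv w s) (Ioi s) s :=
          (hds.const_mul r).hasDerivWithinAt
        have h2 : φ s = r * deriv w s := by
          have hA : ¬(w s < 0 ∨ (w s ≤ 0 ∧ deriv w s < 0)) := by
            push_neg; exact ⟨le_of_eq hws.symm, fun _ => hd.le⟩
          simp only [hφ_def, if_neg hA]
        rw [h2]
        exact h1.congr_of_eventuallyEq hEq (by simp [Lam, hws])
    · have hEq : (fun u => Lam ρ r (w u)) =ᶠ[𝓝 s] fun u => r * w u := by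
        filter_upwards [hcs (Ioi_mem_nhds hws)] with u hu
        simp only [Set.mem_preimage, Set.mem_Ioi] at hu
        simp [Lam, not_lt.mpr hu.le, asymm hu]
      have h1 : HasDerivAt (fun u => r * w u) (r * deriv w s) s := hds.const_mul r
      have h2 : φ s = r * deriv w s := by
        have hA : ¬(w s < 0 ∨ (w s ≤ 0 ∧ deriv w s < 0)) := by
          push_neg
          exact ⟨hws.le, fun h => absurd h (not_le.mpr hws)⟩
        simp only [hφ_def, if_neg hA]
      rw [h2]
      exact (h1.congr_of_eventuallyEq hEq).hasDerivWithinAt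
  have hFTC : ∫ s in a..b, φ s = Lam ρ r (w b) - Lam ρ r (w a) :=
    intervalIntegral.integral_eq_sub_of_hasDeriv_right_of_le hab.le hF_cont hFd hφ_int
  -- pointwise lower bound
  have hpt : ∀ s, c₂ * (r * (1 - r)) - φ s ≤ f s := by
    intro s
    set u := w s
    set d := deriv w s
    set c := twoPhase c₁ c₂ u with hc
    have hcpos : 0 < c := htp_pos u
    have hdual : ∀ m : ℝ, 0 ≤ m → m ≤ 1 → c * (m * (1 - m)) - m * d ≤ f s := by
      intro m hm0 hm1
      have h1 := gfun_dual hm0 hm1 (d / c)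
      have h2 : c * (m * (1 - m) - m * (d / c)) ≤ c * gfun (d / c) :=
        mul_le_mul_of_nonneg_left h1 hcpos.le
      have h3 : c * (m * (1 - m) - m * (d / c)) = c * (m * (1 - m)) - m * d := by
        field_simp
      rw [h3] at h2
      exact h2
    by_cases hcond : u < 0 ∨ (u ≤ 0 ∧ d < 0)
    · have hφs : φ s = ρ * d := by
        show (if u < 0 ∨ (u ≤ 0 ∧ d < 0) then ρ else r) * d = ρ * d; rw [if_pos hcond]
      rcases hcond with hu | ⟨hu, hd⟩
      · have hcval : c = c₁ := by rw [hc]; unfold twoPhase; rw [if_pos hu]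
        have := hdual ρ hρ0 (by linarith)
        rw [hcval] at this
        rw [hφs]; linarith
      · -- u = 0 (since u ≤ 0 and ¬(u < 0) may not hold; but u ≤ 0 here), c could be c₁ or c₂
        by_cases hu' : u < 0
        · have hcval : c = c₁ := by rw [hc]; unfold twoPhase; rw [if_pos hu']
          have := hdual ρ hρ0 (by linarith)
          rw [hcval] at this
          rw [hφs]; linarith
        · have hcval : c = c₂ := by rw [hc]; unfold twoPhase; rw [if_neg hu']
          have h4 := hdual r hr0 hr1
          rw [hcval] at h4
          have h5 : r * d ≤ ρ * d := by nlinarith [sub_nonneg.mpr hρr]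
          rw [hφs]; linarith
    · have hφs : φ s = r * d := by
        show (if u < 0 ∨ (u ≤ 0 ∧ d < 0) then ρ else r) * d = r * d; rw [if_neg hcond]
      push_neg at hcond
      have hu : ¬u < 0 := not_lt.mpr hcond.1
      have hcval : c = c₂ := by rw [hc]; unfold twoPhase; rw [if_neg hu]
      have h4 := hdual r hr0 hr1
      rw [hcval] at h4
      rw [hφs]; linarith
  refine ⟨hf_int, ?_⟩
  have hmono : ∫ s in a..b, (c₂ * (r * (1 - r)) - φ s) ≤ ∫ s in a..b, f s :=
    intervalIntegral.integral_mono_on hab.le (intervalIntegrable_const.sub hφ_int) hf_int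
      fun s _ => hpt s
  rw [intervalIntegral.integral_sub intervalIntegrable_const hφ_int,
    intervalIntegral.integral_const, hFTC, smul_eq_mul] at hmono
  linarith

end Piece


lemma path_bound {c₁ c₂ ρ r : ℝ} (h₂ : 0 < c₂) (h₁₂ : c₂ ≤ c₁) (hρ0 : 0 ≤ ρ) (hρr : ρ ≤ r)
    (hr1 : r ≤ 1) (hK : c₂ * (r * (1 - r)) ≤ c₁ * (ρ * (1 - ρ)))
    {t x : ℝ} (ht : 0 < t) {w : ℝ → ℝ} (hw : IsVPath t x w) :
    IntervalIntegrable
      (fun s => twoPhase c₁ c₂ (w s) * gfun (deriv w s / twoPhase c₁ c₂ (w s))) volume 0 t ∧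
    ρ * w 0 - ∫ s in (0:ℝ)..t, twoPhase c₁ c₂ (w s) * gfun (deriv w s / twoPhase c₁ c₂ (w s))
      ≤ Lam ρ r x - c₂ * (r * (1 - r)) * t := by
  obtain ⟨hcont, hwt, k, s, hsm, hs0, hsl, hpieces⟩ := hw
  set f : ℝ → ℝ := fun s => twoPhase c₁ c₂ (w s) * gfun (deriv w s / twoPhase c₁ c₂ (w s))
    with hf_def
  have hk : 0 < k := by
    by_contra hk
    push_neg at hk
    interval_cases k
    rw [show (Fin.last 0) = 0 from rfl, hs0] at hsl
    exact absurd hsl.symm (ne_of_gt ht)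
  set a : ℕ → ℝ := fun n => s ⟨min n k, Nat.lt_succ_of_le (min_le_right n k)⟩ with ha_def
  have haeq : ∀ (n : ℕ) (hn : n ≤ k), a n = s ⟨n, Nat.lt_succ_of_le hn⟩ := by
    intro n hn
    simp only [ha_def]
    congr 1
    exact Fin.ext (by simp [Nat.min_eq_left hn])
  have ha0 : a 0 = 0 := by rw [haeq 0 (Nat.zero_le k), show (⟨0, _⟩ : Fin (k+1)) = 0 from rfl, hs0]
  have hak : a k = t := by
    rw [haeq k le_rfl]
    rw [show (⟨k, _⟩ : Fin (k+1)) = Fin.last k from rfl, hsl]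
  have hpiece : ∀ i : ℕ, i < k →
      IntervalIntegrable f volume (a i) (a (i+1)) ∧
      c₂ * (r * (1 - r)) * (a (i+1) - a i) - (Lam ρ r (w (a (i+1))) - Lam ρ r (w (a i)))
        ≤ ∫ u in (a i)..(a (i+1)), f u := by
    intro i hik
    have h1 : a i = s ((⟨i, hik⟩ : Fin k).castSucc) := haeq i hik.le
    have h2 : a (i+1) = s ((⟨i, hik⟩ : Fin k).succ) := haeq (i+1) hik
    have hlt : a i < a (i+1) := by
      rw [h1, h2]; exact hsm (by simp [Fin.lt_def])
    have hcd : ContDiffOn ℝ 1 w (Icc (a i) (a (i+1))) := by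
      rw [h1, h2]; exact hpieces ⟨i, hik⟩
    exact piece_bound h₂ h₁₂ hρ0 hρr hr1 hK hlt hcd
  have hint : ∀ i < k, IntervalIntegrable f volume (a i) (a (i+1)) := fun i hi => (hpiece i hi).1
  have htot : IntervalIntegrable f volume 0 t := by
    have := IntervalIntegrable.trans_iterate hint
    rwa [ha0, hak] at this
  refine ⟨htot, ?_⟩
  have hsum : ∑ i ∈ Finset.range k, ∫ u in (a i)..(a (i+1)), f u = ∫ u in (0:ℝ)..t, f u := by
    have := intervalIntegral.sum_integral_adjacent_intervals hint
    rwa [ha0, hak] at this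
  have hsum_le : ∑ i ∈ Finset.range k,
      (c₂ * (r * (1 - r)) * (a (i+1) - a i) - (Lam ρ r (w (a (i+1))) - Lam ρ r (w (a i))))
      ≤ ∑ i ∈ Finset.range k, ∫ u in (a i)..(a (i+1)), f u :=
    Finset.sum_le_sum fun i hi => (hpiece i (Finset.mem_range.mp hi)).2
  have htel : ∑ i ∈ Finset.range k,
      (c₂ * (r * (1 - r)) * (a (i+1) - a i) - (Lam ρ r (w (a (i+1))) - Lam ρ r (w (a i))))
      = c₂ * (r * (1 - r)) * t - (Lam ρ r x - Lam ρ r (w 0)) := by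
    have h1 : ∀ i : ℕ, c₂ * (r * (1 - r)) * (a (i+1) - a i)
        - (Lam ρ r (w (a (i+1))) - Lam ρ r (w (a i)))
        = (c₂ * (r * (1 - r)) * a (i+1) - Lam ρ r (w (a (i+1))))
          - (c₂ * (r * (1 - r)) * a i - Lam ρ r (w (a i))) := by intro i; ring
    simp_rw [h1]
    rw [Finset.sum_range_sub (fun n => c₂ * (r * (1 - r)) * a n - Lam ρ r (w (a n))) k]
    rw [ha0, hak, hwt]
    ring
  rw [htel] at hsum_le
  rw [hsum] at hsum_le
  have hL0 : ρ * w 0 ≤ Lam ρ r (w 0) := rho_le_Lam hρr (w 0)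
  linarith


/-- helper: integral of an a.e.-constant function -/
lemma integrable_and_integral_of_ae_const {f : ℝ → ℝ} {C p a b : ℝ} (hab : a ≤ b)
    (h : ∀ s ∈ Ioc a b, s ≠ p → f s = C) :
    IntervalIntegrable f volume a b ∧ ∫ s in a..b, f s = (b - a) * C := by
  have hp : ∀ᵐ x : ℝ, x ≠ p := by simp [ae_iff, Set.setOf_eq_eq_singleton]
  have hae : f =ᵐ[volume.restrict (Ioc a b)] fun _ => C := by
    filter_upwards [ae_restrict_mem measurableSet_Ioc, ae_restrict_of_ae hp] with x hx hxp
    exact h x hx hxp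
  constructor
  · rw [intervalIntegrable_iff_integrableOn_Ioc_of_le hab]
    exact (integrable_const C).congr hae.symm
  · have h2 : ∀ᵐ x ∂volume, x ∈ Set.uIoc a b → f x = C := by
      rw [uIoc_of_le hab]
      filter_upwards [hp] with x hxp hx
      exact h x hx hxp
    rw [intervalIntegral.integral_congr_ae h2, intervalIntegral.integral_const, smul_eq_mul]

/-- the affine path -/
lemma isVPath_affine {t : ℝ} (ht : 0 < t) (x b0 : ℝ) :
    IsVPath t x (fun s => x + b0 * (s - t)) := by
  refine ⟨(by fun_prop), by simp, 1, ![0, t], ?_, rfl, rfl, ?_⟩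
  · rw [Fin.strictMono_iff_lt_succ]
    intro i
    fin_cases i
    simpa using ht
  · intro i
    exact (by fun_prop : ContDiff ℝ 1 fun s => x + b0 * (s - t)).contDiffOn

lemma deriv_affine (x b0 t : ℝ) (s : ℝ) : deriv (fun u => x + b0 * (u - t)) s = b0 := by
  have h : HasDerivAt (fun u => x + b0 * (u - t)) b0 s := by
    simpa using (((hasDerivAt_id s).sub_const t).const_mul b0).const_add x
  exact h.deriv

lemma deriv_mul_sub (b c s : ℝ) : deriv (fun u => b * (u - c)) s = b := by
  have h : HasDerivAt (fun u => b * (u - c)) b s := by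
    simpa using ((hasDerivAt_id s).sub_const c).const_mul b
  exact h.deriv

section Members
variable {c₁ c₂ ρ rs t x : ℝ}


/-- Region 1 member: staying in the left phase. -/
lemma mem1 {c₁ c₂ ρ t x : ℝ} (h₂ : 0 < c₂) (h₁₂ : c₂ ≤ c₁) (hρ0 : 0 ≤ ρ) (hρh : ρ ≤ 1/2)
    (ht : 0 < t) (hx : x < 0) :
    ∃ w, IsVPath t x w ∧
      ρ * x - c₁ * (ρ*(1-ρ)) * t = ρ * (w 0) - ∫ s in (0:ℝ)..t,
        twoPhase c₁ c₂ (w s) * gfun (deriv w s / twoPhase c₁ c₂ (w s)) := by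
  have hc₁ : 0 < c₁ := lt_of_lt_of_le h₂ h₁₂
  set b0 := c₁ * (1 - 2*ρ) with hb0_def
  have hb0 : 0 ≤ b0 := mul_nonneg hc₁.le (by linarith)
  refine ⟨fun s => x + b0 * (s - t), isVPath_affine ht x b0, ?_⟩
  have hside : ∀ s ∈ Ioc (0:ℝ) t, s ≠ 0 →
      twoPhase c₁ c₂ ((fun u => x + b0 * (u - t)) s) *
        gfun (deriv (fun u => x + b0 * (u - t)) s /
          twoPhase c₁ c₂ ((fun u => x + b0 * (u - t)) s)) = c₁ * ρ^2 := by
    intro s hs _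
    simp only
    have hneg : x + b0 * (s - t) < 0 := by nlinarith [hs.2, mul_nonneg hb0 (sub_nonneg.mpr hs.2)]
    have htp : twoPhase c₁ c₂ (x + b0 * (s - t)) = c₁ := if_pos hneg
    rw [deriv_affine, htp, hb0_def]
    have hdiv : c₁ * (1 - 2*ρ) / c₁ = 1 - 2*ρ := by field_simp
    rw [hdiv, gfun_eval (by linarith) (by linarith)]
    ring
  obtain ⟨-, hval⟩ := integrable_and_integral_of_ae_const ht.le hside
  rw [hval]
  simp only
  rw [hb0_def]
  ring

/-- Region 4 member: staying in the right phase. -/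
lemma mem4 {c₁ c₂ ρ t x : ℝ} (h₂ : 0 < c₂) (h₁₂ : c₂ ≤ c₁) (hρ0 : 0 ≤ ρ) (hρh : ρ ≤ 1/2)
    (ht : 0 < t) (hx : c₂ * (1 - 2*ρ) * t < x) :
    ∃ w, IsVPath t x w ∧
      ρ * x - c₂ * (ρ*(1-ρ)) * t = ρ * (w 0) - ∫ s in (0:ℝ)..t,
        twoPhase c₁ c₂ (w s) * gfun (deriv w s / twoPhase c₁ c₂ (w s)) := by
  set b0 := c₂ * (1 - 2*ρ) with hb0_def
  have hb0 : 0 ≤ b0 := mul_nonneg h₂.le (by linarith)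
  refine ⟨fun s => x + b0 * (s - t), isVPath_affine ht x b0, ?_⟩
  have hside : ∀ s ∈ Ioc (0:ℝ) t, s ≠ 0 →
      twoPhase c₁ c₂ ((fun u => x + b0 * (u - t)) s) *
        gfun (deriv (fun u => x + b0 * (u - t)) s /
          twoPhase c₁ c₂ ((fun u => x + b0 * (u - t)) s)) = c₂ * ρ^2 := by
    intro s hs _
    simp only
    have hpos : 0 < x + b0 * (s - t) := by nlinarith [hs.1, hs.2, mul_nonneg hb0 hs.1.le]
    have htp : twoPhase c₁ c₂ (x + b0 * (s - t)) = c₂ := if_neg (not_lt.mpr hpos.le)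
    rw [deriv_affine, htp, hb0_def]
    have hdiv : c₂ * (1 - 2*ρ) / c₂ = 1 - 2*ρ := by field_simp
    rw [hdiv, gfun_eval (by linarith) (by linarith)]
    ring
  obtain ⟨-, hval⟩ := integrable_and_integral_of_ae_const ht.le hside
  rw [hval]
  simp only
  rw [hb0_def]
  ring

/-- Region 3 member: straight ray from the origin. -/
lemma mem3 {c₁ c₂ ρ t x : ℝ} (h₂ : 0 < c₂) (h₁₂ : c₂ ≤ c₁) (ht : 0 < t)
    (hx0 : 0 < x) (hx2 : x ≤ c₂ * t) :
    ∃ w, IsVPath t x w ∧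
      -((c₂*t) * ((1 - x/(c₂*t))/2)^2) = ρ * (w 0) - ∫ s in (0:ℝ)..t,
        twoPhase c₁ c₂ (w s) * gfun (deriv w s / twoPhase c₁ c₂ (w s)) := by
  set b0 := x / t with hb0_def
  have hb0 : 0 < b0 := div_pos hx0 ht
  refine ⟨fun s => x + b0 * (s - t), isVPath_affine ht x b0, ?_⟩
  have hside : ∀ s ∈ Ioc (0:ℝ) t, s ≠ 0 →
      twoPhase c₁ c₂ ((fun u => x + b0 * (u - t)) s) *
        gfun (deriv (fun u => x + b0 * (u - t)) s /
          twoPhase c₁ c₂ ((fun u => x + b0 * (u - t)) s))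
        = c₂ * ((1 - x/(c₂*t))/2)^2 * 4 / 4 := by
    intro s hs _
    simp only
    have hws : x + b0 * (s - t) = b0 * s := by
      rw [hb0_def]; field_simp; ring
    have hpos : 0 < x + b0 * (s - t) := by rw [hws]; exact mul_pos hb0 hs.1
    have htp : twoPhase c₁ c₂ (x + b0 * (s - t)) = c₂ := if_neg (not_lt.mpr hpos.le)
    rw [deriv_affine, htp]
    have hyle : b0 / c₂ ≤ 1 := by
      rw [div_le_one h₂, hb0_def, div_le_iff₀ ht]
      nlinarith [hx2]
    have hyge : (0:ℝ) ≤ b0 / c₂ := le_of_lt (div_pos hb0 h₂)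
    rw [gfun_eval (by linarith) hyle]
    have heq : b0 / c₂ = x / (c₂ * t) := by
      rw [hb0_def, div_div, mul_comm t c₂]
    rw [heq]
    ring
  obtain ⟨-, hval⟩ := integrable_and_integral_of_ae_const ht.le hside
  rw [hval]
  simp only
  have hw0 : x + b0 * (0 - t) = 0 := by rw [hb0_def]; field_simp; ring
  rw [hw0]
  ring

/-- Region 2 member: two-phase path crossing the interface. -/
lemma mem2 {c₁ c₂ ρ rs t x : ℝ} (h₂ : 0 < c₂) (h₁₂ : c₂ ≤ c₁) (hρ0 : 0 ≤ ρ) (hrs0 : 0 ≤ rs)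
    (hrsh : rs < 1/2) (hρh' : ρ < 1/2)
    (ht : 0 < t) (hx0 : 0 < x) (hxu : x < c₂ * (1 - 2*rs) * t) :
    ∃ w, IsVPath t x w ∧
      ρ * (-(c₁ * (1 - 2*ρ) * (t - x / (c₂ * (1 - 2*rs)))))
        - ((t - x / (c₂ * (1 - 2*rs))) * (c₁ * ρ^2)
          + (t - (t - x / (c₂ * (1 - 2*rs)))) * (c₂ * rs^2))
        = ρ * (w 0) - ∫ s in (0:ℝ)..t,
        twoPhase c₁ c₂ (w s) * gfun (deriv w s / twoPhase c₁ c₂ (w s)) := by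
  have hc₁ : 0 < c₁ := lt_of_lt_of_le h₂ h₁₂
  set b₁ := c₁ * (1 - 2*ρ) with hb₁_def
  set b₂ := c₂ * (1 - 2*rs) with hb₂_def
  have hb₁ : 0 < b₁ := mul_pos hc₁ (by linarith)
  have hb₂ : 0 < b₂ := mul_pos h₂ (by linarith)
  set τ := t - x / b₂ with hτ_def
  have hτ0 : 0 < τ := by
    rw [hτ_def, sub_pos, div_lt_iff₀ hb₂]
    nlinarith [hxu]
  have hτt : τ < t := by
    rw [hτ_def]
    have : 0 < x / b₂ := div_pos hx0 hb₂
    linarith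
  set w : ℝ → ℝ := fun s => if s ≤ τ then b₁ * (s - τ) else b₂ * (s - τ) with hw_def
  have hw0 : w 0 = -(b₁ * τ) := by
    simp only [hw_def, if_pos hτ0.le]; ring
  have hwt : w t = x := by
    show (if t ≤ τ then b₁ * (t - τ) else b₂ * (t - τ)) = x
    rw [if_neg (not_le.mpr hτt), hτ_def]
    field_simp
    ring
  have hcontw : Continuous w := by
    rw [hw_def]
    apply Continuous.if_le (by fun_prop) (by fun_prop) continuous_id continuous_const
    intro u hu
    rw [show u = τ from hu]; ring
  have hpath : IsVPath t x w := by
    refine ⟨hcontw.continuousOn, hwt, 2, ![0, τ, t], ?_, rfl, rfl, ?_⟩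
    · rw [Fin.strictMono_iff_lt_succ]
      intro i
      fin_cases i
      · simpa using hτ0
      · simpa using hτt
    · intro i
      fin_cases i
      · show ContDiffOn ℝ 1 w (Icc 0 τ)
        refine ((by fun_prop : ContDiff ℝ 1 fun u => b₁ * (u - τ)).contDiffOn).congr ?_
        intro u hu
        simp only [hw_def, if_pos hu.2]
      · show ContDiffOn ℝ 1 w (Icc τ t)
        refine ((by fun_prop : ContDiff ℝ 1 fun u => b₂ * (u - τ)).contDiffOn).congr ?_
        intro u hu
        rcases eq_or_lt_of_le hu.1 with h | h
        · rw [← h]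
          simp only [hw_def, if_pos (le_refl τ)]
          ring
        · simp only [hw_def, if_neg (not_le.mpr h)]
  refine ⟨w, hpath, ?_⟩
  have hside1 : ∀ s ∈ Ioc (0:ℝ) τ, s ≠ τ →
      twoPhase c₁ c₂ (w s) * gfun (deriv w s / twoPhase c₁ c₂ (w s)) = c₁ * ρ^2 := by
    intro s hs hsτ
    have hsτ' : s < τ := lt_of_le_of_ne hs.2 hsτ
    have hEq : w =ᶠ[𝓝 s] fun u => b₁ * (u - τ) := by
      filter_upwards [Iio_mem_nhds hsτ'] with u hu
      simp only [hw_def, if_pos (le_of_lt (mem_Iio.mp hu))]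
    have hd : deriv w s = b₁ := by rw [hEq.deriv_eq, deriv_mul_sub]
    have hws : w s = b₁ * (s - τ) := by simp only [hw_def, if_pos hsτ'.le]
    have hneg : w s < 0 := by rw [hws]; nlinarith
    have htp : twoPhase c₁ c₂ (w s) = c₁ := if_pos hneg
    rw [hd, htp, hb₁_def]
    have hdiv : c₁ * (1 - 2*ρ) / c₁ = 1 - 2*ρ := by field_simp
    rw [hdiv, gfun_eval (by linarith) (by linarith)]
    ring
  have hside2 : ∀ s ∈ Ioc τ t, s ≠ τ →
      twoPhase c₁ c₂ (w s) * gfun (deriv w s / twoPhase c₁ c₂ (w s)) = c₂ * rs^2 := by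
    intro s hs hsτ
    have hsτ' : τ < s := hs.1
    have hEq : w =ᶠ[𝓝 s] fun u => b₂ * (u - τ) := by
      filter_upwards [Ioi_mem_nhds hsτ'] with u hu
      simp only [hw_def, if_neg (not_le.mpr (mem_Ioi.mp hu))]
    have hd : deriv w s = b₂ := by rw [hEq.deriv_eq, deriv_mul_sub]
    have hws : w s = b₂ * (s - τ) := by simp only [hw_def, if_neg (not_le.mpr hsτ')]
    have hpos : 0 < w s := by rw [hws]; nlinarith
    have htp : twoPhase c₁ c₂ (w s) = c₂ := if_neg (not_lt.mpr hpos.le)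
    rw [hd, htp, hb₂_def]
    have hdiv : c₂ * (1 - 2*rs) / c₂ = 1 - 2*rs := by field_simp
    rw [hdiv, gfun_eval (by linarith) (by linarith)]
    ring
  obtain ⟨hint1, hval1⟩ := integrable_and_integral_of_ae_const hτ0.le hside1
  obtain ⟨hint2, hval2⟩ := integrable_and_integral_of_ae_const hτt.le hside2
  have hadd := intervalIntegral.integral_add_adjacent_intervals hint1 hint2
  rw [← hadd, hval1, hval2, hw0]
  ring


end Members

/-- computing `vFun` from a matching upper bound and member. -/
lemma vFun_eq_of {c₁ c₂ ρ r t x E : ℝ} (h₂ : 0 < c₂) (h₁₂ : c₂ ≤ c₁) (hρ0 : 0 ≤ ρ)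
    (hρr : ρ ≤ r) (hr1 : r ≤ 1) (hK : c₂ * (r * (1 - r)) ≤ c₁ * (ρ * (1 - ρ))) (ht : 0 < t)
    (hmem : ∃ w, IsVPath t x w ∧ E = ρ * (w 0) - ∫ s in (0:ℝ)..t,
        twoPhase c₁ c₂ (w s) * gfun (deriv w s / twoPhase c₁ c₂ (w s)))
    (hE : Lam ρ r x - c₂ * (r * (1 - r)) * t = E) :
    vFun (twoPhase c₁ c₂) (fun u => ρ * u) x t = E := by
  obtain ⟨w₀, hw₀, hEval⟩ := hmem
  rw [vFun, if_neg (not_le.mpr ht)]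
  have hub : ∀ A ∈ {A | ∃ w : ℝ → ℝ, IsVPath t x w ∧
      A = (fun u => ρ * u) (w 0) - ∫ s in (0:ℝ)..t,
        twoPhase c₁ c₂ (w s) * gfun (deriv w s / twoPhase c₁ c₂ (w s))}, A ≤ E := by
    rintro A ⟨w, hw, rfl⟩
    have h := (path_bound h₂ h₁₂ hρ0 hρr hr1 hK ht hw).2
    simp only
    linarith
  have hmem' : E ∈ {A | ∃ w : ℝ → ℝ, IsVPath t x w ∧
      A = (fun u => ρ * u) (w 0) - ∫ s in (0:ℝ)..t,
        twoPhase c₁ c₂ (w s) * gfun (deriv w s / twoPhase c₁ c₂ (w s))} :=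
    ⟨w₀, hw₀, by simpa using hEval⟩
  exact le_antisymm (csSup_le ⟨E, hmem'⟩ hub) (le_csSup ⟨E, hub⟩ hmem')


section Regions
variable {c₁ c₂ ρ rs t x : ℝ}

lemma vFun_eq_region1 (h₂ : 0 < c₂) (h₁₂ : c₂ ≤ c₁) (hρl : 0 < ρ) (hρh' : ρ < 1/2)
    (hρrs : ρ ≤ rs) (hrsh : rs < 1/2)
    (hkey : c₂ * (rs * (1 - rs)) = c₁ * (ρ * (1 - ρ))) (ht : 0 < t) (hx : x < 0) :
    vFun (twoPhase c₁ c₂) (fun u => ρ * u) x t = ρ * x - c₁ * (ρ*(1-ρ)) * t := by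
  apply vFun_eq_of h₂ h₁₂ hρl.le hρrs (by linarith) (le_of_eq hkey) ht
    (mem1 h₂ h₁₂ hρl.le hρh'.le ht hx)
  rw [show Lam ρ rs x = ρ * x from if_pos hx, ← hkey]
  all_goals ring

lemma vFun_eq_region2 (h₂ : 0 < c₂) (h₁₂ : c₂ ≤ c₁) (hρl : 0 < ρ) (hρh' : ρ < 1/2)
    (hρrs : ρ ≤ rs) (hrsh : rs < 1/2)
    (hkey : c₂ * (rs * (1 - rs)) = c₁ * (ρ * (1 - ρ))) (ht : 0 < t)
    (hx0 : 0 < x) (hx1 : x < c₂ * (1 - 2*rs) * t) :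
    vFun (twoPhase c₁ c₂) (fun u => ρ * u) x t = rs * x - c₂ * (rs*(1-rs)) * t := by
  have hrs0 : (0:ℝ) ≤ rs := le_trans hρl.le hρrs
  obtain ⟨w, hw, hval⟩ := mem2 (rs := rs) h₂ h₁₂ hρl.le hrs0 hrsh hρh' ht hx0 hx1
  have hb₂ : (0:ℝ) < c₂ * (1 - 2*rs) := mul_pos h₂ (by linarith)
  set u := x / (c₂ * (1 - 2*rs)) with hu_def
  have hxu : x = c₂ * (1 - 2*rs) * u := by
    rw [hu_def]; field_simp [ne_of_gt (by linarith : (0:ℝ) < 1 - 2*rs)]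
  have hAE : rs * x - c₂ * (rs*(1-rs)) * t
      = ρ * (-(c₁ * (1 - 2*ρ) * (t - u)))
        - ((t - u) * (c₁ * ρ^2) + (t - (t - u)) * (c₂ * rs^2)) := by
    rw [hxu]
    linear_combination (u - t) * hkey
  refine vFun_eq_of h₂ h₁₂ hρl.le hρrs (by linarith) (le_of_eq hkey) ht
    ⟨w, hw, by rw [hAE]; exact hval⟩ ?_
  rw [show Lam ρ rs x = rs * x from if_neg (not_lt.mpr hx0.le)]

lemma vFun_eq_region3 (h₂ : 0 < c₂) (h₁₂ : c₂ ≤ c₁) (hρl : 0 < ρ) (hρh' : ρ < 1/2)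
    (hρrs : ρ ≤ rs) (hrsh : rs < 1/2)
    (hkey : c₂ * (rs * (1 - rs)) = c₁ * (ρ * (1 - ρ))) (ht : 0 < t)
    (hx1 : c₂ * (1 - 2*rs) * t < x) (hx2 : x < c₂ * (1 - 2*ρ) * t) :
    vFun (twoPhase c₁ c₂) (fun u => ρ * u) x t = -((c₂*t) * ((1 - x/(c₂*t))/2)^2) := by
  have hct : (0:ℝ) < c₂ * t := mul_pos h₂ ht
  have hx0 : 0 < x := lt_trans (mul_pos (mul_pos h₂ (by linarith)) ht) hx1
  have hxct : x ≤ c₂ * t := by nlinarith [mul_pos (mul_pos hρl h₂) ht]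
  set r' := (1 - x/(c₂*t))/2 with hr'_def
  have hr'ρ : ρ ≤ r' := by
    rw [hr'_def]
    have h9 : x / (c₂ * t) < 1 - 2*ρ := by
      rw [div_lt_iff₀ hct]; nlinarith
    linarith
  have hr'rs : r' ≤ rs := by
    rw [hr'_def]
    have h9 : 1 - 2*rs ≤ x / (c₂ * t) := by
      rw [le_div_iff₀ hct]; nlinarith
    linarith
  have hKr' : c₂ * (r' * (1 - r')) ≤ c₁ * (ρ * (1 - ρ)) := by
    rw [← hkey]
    have h6 : r' * (1 - r') ≤ rs * (1 - rs) := by nlinarith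
    nlinarith
  apply vFun_eq_of h₂ h₁₂ hρl.le hr'ρ (by linarith) hKr' ht (mem3 h₂ h₁₂ ht hx0 hxct)
  rw [show Lam ρ r' x = r' * x from if_neg (not_lt.mpr hx0.le), hr'_def]
  set y := x / (c₂*t) with hy_def
  have hxy : x = (c₂*t) * y := by
    rw [hy_def]; field_simp
  rw [hxy]
  ring

lemma vFun_eq_region4 (h₂ : 0 < c₂) (h₁₂ : c₂ ≤ c₁) (hρl : 0 < ρ) (hρh' : ρ < 1/2)
    (ht : 0 < t) (hx : c₂ * (1 - 2*ρ) * t < x) :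
    vFun (twoPhase c₁ c₂) (fun u => ρ * u) x t = ρ * x - c₂ * (ρ*(1-ρ)) * t := by
  have hxpos : 0 < x :=
    lt_of_le_of_lt (mul_nonneg (mul_nonneg h₂.le (by linarith)) ht.le) hx
  apply vFun_eq_of h₂ h₁₂ hρl.le (le_refl ρ) (by linarith)
    (mul_le_mul_of_nonneg_right h₁₂ (by nlinarith)) ht
    (mem4 h₂ h₁₂ hρl.le hρh'.le ht hx)
  rw [show Lam ρ ρ x = ρ * x from if_neg (not_lt.mpr hxpos.le)]

end Regions

/-- Theorem: two-phase density profile from constant initial density `ρ ∈ (0, ρ*)`. -/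
theorem stmt13 (c₁ c₂ ρ rs : ℝ) (h₁₂ : c₂ ≤ c₁) (h₂ : 0 < c₂)
    (hρl : 0 < ρ) (hρu : ρ < 1 / 2 - Real.sqrt (1 - c₂ / c₁) / 2)
    (hrs : rs = 1 / 2 - Real.sqrt (1 - 4 * ρ * (1 - ρ) * c₁ / c₂) / 2) :
    ∀ t : ℝ, 0 < t → ∀ x : ℝ,
      x ≠ 0 → x ≠ c₂ * (1 - 2 * rs) * t → x ≠ c₂ * (1 - 2 * ρ) * t →
      HasDerivAt (fun x' => vFun (twoPhase c₁ c₂) (fun u => ρ * u) x' t)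
        (if x < 0 then ρ
         else if x < c₂ * (1 - 2 * rs) * t then rs
         else if x < c₂ * (1 - 2 * ρ) * t then (1 - x / (t * c₂)) / 2
         else ρ) x := by
  intro t ht x hx0 hx1 hx2
  have hc₁ : 0 < c₁ := lt_of_lt_of_le h₂ h₁₂
  -- numeric facts
  have hσ0 : 0 ≤ Real.sqrt (1 - c₂ / c₁) := Real.sqrt_nonneg _
  have hρh' : ρ < 1/2 := by linarith
  have hq1 : c₂ / c₁ ≤ 1 := div_le_one_of_le₀ h₁₂ hc₁.le
  have hσsq : Real.sqrt (1 - c₂ / c₁) ^ 2 = 1 - c₂ / c₁ :=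
    Real.sq_sqrt (by linarith)
  have h4ρ : 4 * ρ * (1 - ρ) < c₂ / c₁ := by
    nlinarith [hσsq, hρu, hσ0]
  have h4ρ' : 4 * ρ * (1 - ρ) * c₁ < c₂ := by
    rw [← lt_div_iff₀ hc₁] at *
    nlinarith [hc₁, h4ρ]
  have harg : 0 < 1 - 4 * ρ * (1 - ρ) * c₁ / c₂ := by
    rw [sub_pos, div_lt_one h₂]
    exact h4ρ'
  have hτsq : Real.sqrt (1 - 4 * ρ * (1 - ρ) * c₁ / c₂) ^ 2 = 1 - 4 * ρ * (1 - ρ) * c₁ / c₂ :=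
    Real.sq_sqrt harg.le
  have hτpos : 0 < Real.sqrt (1 - 4 * ρ * (1 - ρ) * c₁ / c₂) := Real.sqrt_pos.mpr harg
  have harg1 : 1 - 4 * ρ * (1 - ρ) * c₁ / c₂ < 1 := by
    have h10 : 0 < 4 * ρ * (1 - ρ) * c₁ / c₂ := by
      apply div_pos _ h₂
      apply mul_pos _ hc₁
      nlinarith
    linarith
  have hτlt1 : Real.sqrt (1 - 4 * ρ * (1 - ρ) * c₁ / c₂) < 1 := by
    nlinarith [hτsq, hτpos]
  have hrsh : rs < 1/2 := by rw [hrs]; linarith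
  have hrs0 : 0 < rs := by rw [hrs]; linarith
  have hkey : c₂ * (rs * (1 - rs)) = c₁ * (ρ * (1 - ρ)) := by
    have h5 : rs * (1 - rs) = (1 - Real.sqrt (1 - 4 * ρ * (1 - ρ) * c₁ / c₂) ^ 2) / 4 := by
      rw [hrs]; ring
    rw [h5, hτsq]
    field_simp
    ring
  have hρrs : ρ ≤ rs := by
    by_contra hcon
    push_neg at hcon
    have h7 : c₂ * (ρ * (1-ρ)) ≤ c₁ * (ρ * (1-ρ)) :=
      mul_le_mul_of_nonneg_right h₁₂ (by nlinarith)
    have h8 : (0:ℝ) < (ρ - rs) * (1 - ρ - rs) :=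
      mul_pos (sub_pos.mpr hcon) (by linarith)
    nlinarith [mul_pos h₂ h8]
  have hx₁pos : 0 < c₂ * (1 - 2 * rs) * t := mul_pos (mul_pos h₂ (by linarith)) ht
  rcases lt_trichotomy x 0 with hxneg | hxz | hxpos
  · -- region 1
    rw [if_pos hxneg]
    have hg : HasDerivAt (fun x' : ℝ => ρ * x' - c₁ * (ρ*(1-ρ)) * t) ρ x := by
      simpa using ((hasDerivAt_id x).const_mul ρ).sub_const (c₁ * (ρ*(1-ρ)) * t)
    apply hg.congr_of_eventuallyEq
    filter_upwards [Iio_mem_nhds hxneg] with x' hx'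
    exact vFun_eq_region1 h₂ h₁₂ hρl hρh' hρrs hrsh hkey ht (mem_Iio.mp hx')
  · exact absurd hxz hx0
  · -- x > 0
    rw [if_neg (not_lt.mpr hxpos.le)]
    rcases lt_trichotomy x (c₂ * (1 - 2 * rs) * t) with hxa | hxb | hxc
    · -- region 2
      rw [if_pos hxa]
      have hg : HasDerivAt (fun x' : ℝ => rs * x' - c₂ * (rs*(1-rs)) * t) rs x := by
        simpa using ((hasDerivAt_id x).const_mul rs).sub_const (c₂ * (rs*(1-rs)) * t)
      apply hg.congr_of_eventuallyEq
      filter_upwards [Ioo_mem_nhds hxpos hxa] with x' hx'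
      exact vFun_eq_region2 h₂ h₁₂ hρl hρh' hρrs hrsh hkey ht hx'.1 hx'.2
    · exact absurd hxb hx1
    · -- x > x₁
      rw [if_neg (not_lt.mpr (le_of_lt hxc))]
      rcases lt_trichotomy x (c₂ * (1 - 2 * ρ) * t) with hxd | hxe | hxf
      · -- region 3
        rw [if_pos hxd]
        have hct : (0:ℝ) < c₂ * t := mul_pos h₂ ht
        have hg : HasDerivAt (fun x' : ℝ => -((c₂*t) * ((1 - x'/(c₂*t))/2)^2))
            ((1 - x / (t * c₂)) / 2) x := by
          have h1 : HasDerivAt (fun x' : ℝ => (1 - x'/(c₂*t))/2) (-(1/(c₂*t))/2) x := by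
            simpa using (((hasDerivAt_id x).div_const (c₂*t)).const_sub 1).div_const 2
          have h2 := ((h1.pow 2).const_mul (c₂*t)).neg
          refine HasDerivAt.congr_deriv h2 ?_
          have hne : (c₂*t) ≠ 0 := ne_of_gt hct
          have hne' : (t*c₂) ≠ 0 := by rw [mul_comm]; exact hne
          have hc2ne : c₂ ≠ 0 := h₂.ne'
          have htne : t ≠ 0 := ht.ne'
          rw [mul_comm t c₂]
          norm_num
          field_simp
        apply hg.congr_of_eventuallyEq
        filter_upwards [Ioo_mem_nhds hxc hxd] with x' hx'
        exact vFun_eq_region3 h₂ h₁₂ hρl hρh' hρrs hrsh hkey ht hx'.1 hx'.2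
      · exact absurd hxe hx2
      · -- region 4
        rw [if_neg (not_lt.mpr (le_of_lt hxf))]
        have hg : HasDerivAt (fun x' : ℝ => ρ * x' - c₂ * (ρ*(1-ρ)) * t) ρ x := by
          simpa using ((hasDerivAt_id x).const_mul ρ).sub_const (c₂ * (ρ*(1-ρ)) * t)
        apply hg.congr_of_eventuallyEq
        filter_upwards [Ioi_mem_nhds hxf] with x' hx'
        exact vFun_eq_region4 h₂ h₁₂ hρl hρh' ht (mem_Ioi.mp hx')

end
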